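/- Let f₁,…,fₙ : ℝ^d → ℝ be μ-strongly convex and L-Lipschitz smooth (μ·I ⪯ ∇²fᵢ ⪯ L·I), with minimizers xᵢ. Let r = max_{i,j} ‖xᵢ − xⱼ‖₂ and κ = L/μ. Then the diameter of the Pareto set of (f₁,…,fₙ) is at most √κ · r. More precisely, if ‖x − xᵢ‖ > 2√κ · r for some i, then x is not Pareto optimal. -/

import Mathlib

/-- `x` is Pareto optimal for the objectives `f`. -/
def ParetoOptimal {α : Type*} {n : ℕ} (f : Fin n → α → ℝ) (x : α) : Prop :=
  ¬ ∃ y, (∀ i, f i y ≤ f i x) ∧ (∃ i, f i y < f i x)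

/-- Lemma A: at a Pareto point, for every test point z some objective increases
by the strong-convexity margin. -/
lemma lemA {d n : ℕ} (hn : 0 < n) (μ : ℝ) (hμ : 0 < μ)
    (f : Fin n → EuclideanSpace ℝ (Fin d) → ℝ)
    (hconv : ∀ i, StrongConvexOn Set.univ μ (f i))
    (p : EuclideanSpace ℝ (Fin d)) (hp : ParetoOptimal f p) :
    ∀ z, ∃ i, f i p + μ/2 * ‖z - p‖^2 ≤ f i z := by
  intro z
  by_contra hcon
  push_neg at hcon
  have hz : z ≠ p := by
    rintro rfl
    have := hcon ⟨0, hn⟩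
    simp at this
  have hS : (0:ℝ) < ‖z - p‖^2 := by
    have h1 : (0:ℝ) < ‖z - p‖ := by
      rw [norm_pos_iff]
      exact sub_ne_zero.mpr hz
    positivity
  -- a uniform positive gap e
  obtain ⟨e, hepos, hgap⟩ : ∃ e : ℝ, 0 < e ∧ ∀ i, f i z ≤ f i p + μ/2 * ‖z - p‖^2 - e := by
    obtain ⟨i₀, -, hi₀⟩ := Finset.exists_min_image Finset.univ
      (fun i => f i p + μ/2 * ‖z - p‖^2 - f i z) ⟨⟨0, hn⟩, Finset.mem_univ _⟩
    simp only [Finset.mem_univ, forall_true_left] at hi₀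
    refine ⟨f i₀ p + μ/2 * ‖z - p‖^2 - f i₀ z, by linarith [hcon i₀], fun i => by linarith [hi₀ i]⟩
  -- a small step size t
  obtain ⟨t, htpos, ht1, hte⟩ : ∃ t : ℝ, 0 < t ∧ t ≤ 1/2 ∧ t * (μ * ‖z - p‖^2) ≤ e := by
    refine ⟨min (1/2) (e / (μ * ‖z - p‖^2)), lt_min (by norm_num) (div_pos hepos (by positivity)),
      min_le_left _ _, ?_⟩
    rw [← le_div_iff₀ (by positivity)]
    exact min_le_right _ _
  have key : ∀ i, f i ((1 - t) • p + t • z) < f i p := by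
    intro i
    have hc := (hconv i).2 (Set.mem_univ p) (Set.mem_univ z)
      (by linarith : (0:ℝ) ≤ 1 - t) (le_of_lt htpos) (by ring)
    rw [smul_eq_mul, smul_eq_mul] at hc
    simp only [norm_sub_rev p z] at hc
    have hfz := hgap i
    have h4 : t * (t * (μ * ‖z - p‖^2)) ≤ t * e := mul_le_mul_of_nonneg_left hte htpos.le
    have h5 : 0 < t * e := mul_pos htpos hepos
    nlinarith
  exact hp ⟨(1 - t) • p + t • z, fun i => (key i).le, ⟨⟨0, hn⟩, key _⟩⟩

-- convex combination identity for squared norms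
lemma norm_combo_sq {E : Type*} [NormedAddCommGroup E] [InnerProductSpace ℝ E]
    (u v : E) (a b : ℝ) (hab : a + b = 1) :
    ‖a • u + b • v‖^2 = a * ‖u‖^2 + b * ‖v‖^2 - a * b * ‖u - v‖^2 := by
  rw [← real_inner_self_eq_norm_sq, ← real_inner_self_eq_norm_sq,
    ← real_inner_self_eq_norm_sq, ← real_inner_self_eq_norm_sq]
  simp only [inner_add_left, inner_add_right, inner_sub_left, inner_sub_right,
    real_inner_smul_left, real_inner_smul_right]
  rw [real_inner_comm v u]
  linear_combination (a * (inner ℝ u u : ℝ) + b * (inner ℝ v v : ℝ)) * hab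

/-- From Pareto optimality, existence of scalarization weights with a strong-convexity margin. -/
lemma exists_weights {d n : ℕ} (hn : 0 < n) (μ : ℝ) (hμ : 0 < μ)
    (f : Fin n → EuclideanSpace ℝ (Fin d) → ℝ)
    (hconv : ∀ i, StrongConvexOn Set.univ μ (f i))
    (p : EuclideanSpace ℝ (Fin d)) (hp : ParetoOptimal f p)
    (lemA : ∀ z, ∃ i, f i p + μ/2 * ‖z - p‖^2 ≤ f i z) :
    ∃ β : Fin n → ℝ, (∀ i, 0 ≤ β i) ∧ (∑ i, β i) = 1 ∧
      ∀ z, (∑ i, β i * f i p) + μ/2 * ‖z - p‖^2 ≤ ∑ i, β i * f i z := by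
  classical
  set O : Set (Fin n → ℝ) := {y | ∀ i, y i < 0} with hO
  set S : Set (Fin n → ℝ) := {y | ∃ z, ∀ i, f i z - f i p - μ/2 * ‖z - p‖^2 ≤ y i} with hS
  have hOopen : IsOpen O := by
    have : O = Set.pi Set.univ (fun _ : Fin n => Set.Iio (0:ℝ)) := by
      ext y; simp [hO, Set.mem_pi]
    rw [this]
    exact isOpen_set_pi Set.finite_univ (fun i _ => isOpen_Iio)
  have hOconv : Convex ℝ O := by
    intro y1 h1 y2 h2 a b ha hb hab
    intro i
    simp only [Pi.add_apply, Pi.smul_apply, smul_eq_mul]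
    rcases eq_or_lt_of_le ha with h | h
    · have hb1 : b = 1 := by linarith
      simp [← h, hb1]
      exact h2 i
    · have hA : a * y1 i < 0 := mul_neg_of_pos_of_neg h (h1 i)
      have hB : b * y2 i ≤ 0 := mul_nonpos_of_nonneg_of_nonpos hb (h2 i).le
      linarith
  have hSconv : Convex ℝ S := by
    rintro y1 ⟨z1, h1⟩ y2 ⟨z2, h2⟩ a b ha hb hab
    refine ⟨a • z1 + b • z2, fun i => ?_⟩
    have hc := (hconv i).2 (Set.mem_univ z1) (Set.mem_univ z2) ha hb hab
    rw [smul_eq_mul, smul_eq_mul] at hc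
    simp only at hc
    have hid : ‖a • z1 + b • z2 - p‖^2
        = a * ‖z1 - p‖^2 + b * ‖z2 - p‖^2 - a * b * ‖z1 - z2‖^2 := by
      have hpp : a • p + b • p = p := by rw [← add_smul, hab, one_smul]
      have hz : a • z1 + b • z2 - p = a • (z1 - p) + b • (z2 - p) := by
        calc a • z1 + b • z2 - p = a • z1 + b • z2 - (a • p + b • p) := by rw [hpp]
          _ = a • (z1 - p) + b • (z2 - p) := by rw [smul_sub, smul_sub]; abel
      rw [hz, norm_combo_sq _ _ _ _ hab]
      congr 2
      abel
    have hy1 := h1 i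
    have hy2 := h2 i
    have hid2 : μ/2 * ‖a • z1 + b • z2 - p‖^2
        = a * (μ/2 * ‖z1 - p‖^2) + b * (μ/2 * ‖z2 - p‖^2) - a * b * (μ/2 * ‖z1 - z2‖^2) := by
      rw [hid]; ring
    have hy1a := mul_le_mul_of_nonneg_left hy1 ha
    have hy2b := mul_le_mul_of_nonneg_left hy2 hb
    have hfp' : a * f i p + b * f i p = f i p := by rw [← add_mul, hab, one_mul]
    simp only [Pi.add_apply, Pi.smul_apply, smul_eq_mul]
    linarith
  have hSne : (0 : Fin n → ℝ) ∈ S := by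
    refine ⟨p, fun i => ?_⟩
    simp
  have hdisj : Disjoint O S := by
    rw [Set.disjoint_left]
    rintro y hyO ⟨z, hz⟩
    obtain ⟨i, hi⟩ := lemA z
    have := hz i
    have := hyO i
    simp only [hO, Set.mem_setOf_eq] at *
    linarith
  obtain ⟨F, u, hFO, hFS⟩ := geometric_hahn_banach_open hOconv hOopen hSconv hdisj
  have hu0 : u ≤ 0 := by
    have := hFS 0 hSne
    simpa using this
  -- basis vectors and coefficients
  set ev : Fin n → (Fin n → ℝ) := fun i => (fun j => if i = j then (1:ℝ) else 0) with hev
  set c : Fin n → ℝ := fun i => F (ev i) with hc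
  have hFdecomp : ∀ y : Fin n → ℝ, F y = ∑ i, y i * c i := by
    intro y
    conv_lhs => rw [pi_eq_sum_univ y]
    rw [map_sum]
    congr 1
    ext i
    rw [map_smul]
    simp [hc, hev]
  have hcnonneg : ∀ i, 0 ≤ c i := by
    intro i
    by_contra hci
    push_neg at hci
    have hmem : ∀ t : ℝ, 0 ≤ t → (t • ev i) ∈ S := by
      intro t htt
      refine ⟨p, fun j => ?_⟩
      simp only [Pi.smul_apply, smul_eq_mul, hev]
      have : (‖p - p‖:ℝ)^2 = 0 := by simp
      by_cases hij : i = j <;> simp [hij, this] <;> positivity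
    set t : ℝ := (u - 1)/(c i) with htdef
    have htpos : 0 ≤ t := by
      apply le_of_lt
      apply div_pos_of_neg_of_neg
      · linarith
      · exact hci
    have := hFS _ (hmem t htpos)
    rw [map_smul] at this
    simp only [smul_eq_mul, ← hc] at this
    rw [htdef] at this
    rw [div_mul_cancel₀] at this
    · linarith
    · exact ne_of_lt hci
  have hCpos : 0 < ∑ i, c i := by
    rcases (Finset.sum_nonneg (fun i _ => hcnonneg i)).lt_or_eq with h | h
    · exact h
    · exfalso
      have hallzero : ∀ i, c i = 0 := by
        intro i
        have := (Finset.sum_eq_zero_iff_of_nonneg (fun j _ => hcnonneg j)).mp h.symm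
        exact this i (Finset.mem_univ i)
      have hmone : (fun _ => (-1:ℝ)) ∈ O := fun i => by norm_num
      have h1 := hFO _ hmone
      rw [hFdecomp] at h1
      simp [hallzero] at h1
      linarith
  have hu0' : 0 ≤ u := by
    by_contra hu
    push_neg at hu
    set ε : ℝ := -u / (2 * ∑ i, c i) with hε
    have hεpos : 0 < ε := by
      apply div_pos (by linarith) (by linarith)
    have hmem : (fun _ => -ε) ∈ O := fun i => by simp; linarith
    have h1 := hFO _ hmem
    rw [hFdecomp] at h1
    have h2 : ∑ i, (-ε) * c i = -ε * ∑ i, c i := by rw [Finset.mul_sum]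
    rw [h2] at h1
    rw [hε] at h1
    have h3 : -(-u / (2 * ∑ i, c i)) * ∑ i, c i = u/2 := by
      field_simp
    rw [h3] at h1
    linarith
  refine ⟨fun i => c i / (∑ j, c j), fun i => div_nonneg (hcnonneg i) hCpos.le, ?_, ?_⟩
  · rw [← Finset.sum_div]
    exact div_self (ne_of_gt hCpos)
  · intro z
    have hmem : (fun i => f i z - f i p - μ/2 * ‖z - p‖^2) ∈ S := ⟨z, fun i => le_rfl⟩
    have h1 := le_trans hu0' (hFS _ hmem)
    rw [hFdecomp] at h1
    have h2 : 0 ≤ ∑ i, (f i z - f i p - μ/2 * ‖z - p‖^2) * (c i / (∑ j, c j)) := by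
      have hdiv := div_nonneg h1 hCpos.le
      have heq : ∑ i, (f i z - f i p - μ/2 * ‖z - p‖^2) * (c i / (∑ j, c j))
          = (∑ i, (f i z - f i p - μ/2 * ‖z - p‖^2) * c i) / (∑ j, c j) := by
        rw [Finset.sum_div]
        apply Finset.sum_congr rfl
        intros
        rw [mul_div_assoc]
      rw [heq]
      exact hdiv
    have h3 : ∑ i, (f i z - f i p - μ/2 * ‖z - p‖^2) * (c i / (∑ j, c j))
        = (∑ i, (c i / (∑ j, c j)) * f i z) - (∑ i, (c i / (∑ j, c j)) * f i p)
          - (∑ i, (c i / (∑ j, c j))) * (μ/2 * ‖z - p‖^2) := by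
      rw [Finset.sum_mul, ← Finset.sum_sub_distrib, ← Finset.sum_sub_distrib]
      apply Finset.sum_congr rfl
      intros
      ring
    have h4 : (∑ i, (c i / (∑ j, c j))) = 1 := by
      rw [← Finset.sum_div]
      exact div_self (ne_of_gt hCpos)
    rw [h3, h4] at h2
    linarith

/-- Bias–variance decomposition. -/
lemma sum_dist_sq {d n : ℕ} (β : Fin n → ℝ) (hβ1 : (∑ i, β i) = 1)
    (x : Fin n → EuclideanSpace ℝ (Fin d)) (c : EuclideanSpace ℝ (Fin d)) :
    ∑ i, β i * ‖c - x i‖^2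
      = ‖c - ∑ j, β j • x j‖^2 + ∑ i, β i * ‖(∑ j, β j • x j) - x i‖^2 := by
  set m : EuclideanSpace ℝ (Fin d) := ∑ j, β j • x j with hm
  have hzero : ∑ i, β i • (m - x i) = 0 := by
    simp only [smul_sub]
    rw [Finset.sum_sub_distrib, ← Finset.sum_smul, hβ1, one_smul]
    exact sub_self m
  have expand : ∀ i, ‖c - x i‖^2
      = ‖c - m‖^2 + 2 * (inner ℝ (c - m) (m - x i) : ℝ) + ‖m - x i‖^2 := by
    intro i
    have h : c - x i = (c - m) + (m - x i) := by abel
    rw [h, norm_add_sq_real]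
  have step1 : ∑ i, β i * ‖c - x i‖^2
      = (∑ i, β i) * ‖c - m‖^2 + 2 * (∑ i, β i * (inner ℝ (c - m) (m - x i) : ℝ))
        + ∑ i, β i * ‖m - x i‖^2 := by
    rw [Finset.sum_mul, Finset.mul_sum, ← Finset.sum_add_distrib, ← Finset.sum_add_distrib]
    apply Finset.sum_congr rfl
    intro i _
    rw [expand i]
    ring
  have step2 : ∑ i, β i * (inner ℝ (c - m) (m - x i) : ℝ) = 0 := by
    have : ∑ i, β i * (inner ℝ (c - m) (m - x i) : ℝ) = (inner ℝ (c - m) (∑ i, β i • (m - x i)) : ℝ) := by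
      rw [inner_sum]
      apply Finset.sum_congr rfl
      intro i _
      rw [real_inner_smul_right]
    rw [this, hzero, inner_zero_right]
  rw [step1, step2, hβ1]
  ring

/-- Per-Pareto-point bound: the weighted center is close to the point. -/
lemma point_bound {d n : ℕ} (μ L : ℝ) (hμ : 0 < μ) (hLμ : μ ≤ L)
    (f : Fin n → EuclideanSpace ℝ (Fin d) → ℝ)
    (xmin : Fin n → EuclideanSpace ℝ (Fin d))
    (hsc : ∀ i x, f i (xmin i) + μ / 2 * ‖x - xmin i‖ ^ 2 ≤ f i x)
    (hsm : ∀ i x, f i x ≤ f i (xmin i) + L / 2 * ‖x - xmin i‖ ^ 2)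
    (p : EuclideanSpace ℝ (Fin d))
    (β : Fin n → ℝ) (hβ0 : ∀ i, 0 ≤ β i) (hβ1 : (∑ i, β i) = 1)
    (hscal : ∀ z, (∑ i, β i * f i p) + μ/2 * ‖z - p‖^2 ≤ ∑ i, β i * f i z) :
    μ * (2*L - μ) * ‖p - ∑ j, β j • xmin j‖^2
      ≤ (L - μ)^2 * ∑ i, β i * ‖(∑ j, β j • xmin j) - xmin i‖^2 := by
  set m : EuclideanSpace ℝ (Fin d) := ∑ j, β j • xmin j with hm
  set U : ℝ := ‖p - m‖^2 with hU
  set V : ℝ := ∑ i, β i * ‖m - xmin i‖^2 with hV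
  have hU0 : 0 ≤ U := sq_nonneg _
  have hV0 : 0 ≤ V := Finset.sum_nonneg fun i _ =>
    mul_nonneg (hβ0 i) (sq_nonneg _)
  -- master inequality (✷): for all z
  have master : ∀ z : EuclideanSpace ℝ (Fin d),
      μ * (U + V) + μ * ‖z - p‖^2 ≤ L * (‖z - m‖^2 + V) := by
    intro z
    have h1 := hscal z
    -- ∑ β f z ≤ ∑ β (f xmin + L/2 ‖z - xmin‖²)
    have h2 : ∑ i, β i * f i z
        ≤ ∑ i, β i * (f i (xmin i) + L/2 * ‖z - xmin i‖^2) :=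
      Finset.sum_le_sum fun i _ => mul_le_mul_of_nonneg_left (hsm i z) (hβ0 i)
    have h3 : ∑ i, β i * (f i (xmin i) + μ/2 * ‖p - xmin i‖^2)
        ≤ ∑ i, β i * f i p :=
      Finset.sum_le_sum fun i _ => mul_le_mul_of_nonneg_left (hsc i p) (hβ0 i)
    have bVz := sum_dist_sq β hβ1 xmin z
    rw [← hm, ← hV] at bVz
    have bVp := sum_dist_sq β hβ1 xmin p
    rw [← hm, ← hV, ← hU] at bVp
    have e2 : ∑ i, β i * (f i (xmin i) + L/2 * ‖z - xmin i‖^2)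
        = (∑ i, β i * f i (xmin i)) + L/2 * ∑ i, β i * ‖z - xmin i‖^2 := by
      rw [Finset.mul_sum, ← Finset.sum_add_distrib]
      apply Finset.sum_congr rfl
      intros
      ring
    have e3 : ∑ i, β i * (f i (xmin i) + μ/2 * ‖p - xmin i‖^2)
        = (∑ i, β i * f i (xmin i)) + μ/2 * ∑ i, β i * ‖p - xmin i‖^2 := by
      rw [Finset.mul_sum, ← Finset.sum_add_distrib]
      apply Finset.sum_congr rfl
      intros
      ring
    rw [e2, bVz] at h2
    rw [e3, bVp] at h3
    linarith
  rcases eq_or_lt_of_le hLμ with hEq | hLt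
  · -- μ = L : plug z = m
    have h := master m
    simp only [sub_self, norm_zero] at h
    have hU00 : U ≤ 0 := by
      rw [← hEq] at h
      have hnp : ‖m - p‖^2 = U := by rw [hU, norm_sub_rev]
      rw [hnp] at h
      nlinarith
    have hUeq : U = 0 := le_antisymm hU00 hU0
    rw [hUeq]
    nlinarith [hV0, sq_nonneg (L - μ)]
  · -- μ < L : plug the optimal test point
    have he : (0:ℝ) < L - μ := by linarith
    set t : ℝ := L / (L - μ) with htdef
    have hte : t * (L - μ) = L := div_mul_cancel₀ _ (ne_of_gt he)
    have h := master (p - t • (p - m))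
    have hz1 : ‖(p - t • (p - m)) - p‖^2 = t^2 * U := by
      have : (p - t • (p - m)) - p = -(t • (p - m)) := by abel
      rw [this, norm_neg, norm_smul, mul_pow, hU]
      simp [sq_abs]
    have hz2 : ‖(p - t • (p - m)) - m‖^2 = (1 - t)^2 * U := by
      have : (p - t • (p - m)) - m = (1 - t) • (p - m) := by
        rw [sub_smul, one_smul]
        abel
      rw [this, norm_smul, mul_pow, hU]
      simp [sq_abs]
    rw [hz1, hz2] at h
    -- now pure algebra
    have key : μ * (U + V) + μ * (t^2 * U) ≤ L * ((1 - t)^2 * U + V) := h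
    rw [htdef] at key
    have he' : (L - μ) ≠ 0 := ne_of_gt he
    field_simp at key
    nlinarith [key, he, hU0, hV0, mul_pos he he, mul_pos (mul_pos he he) he, mul_pos hμ he]

set_option maxHeartbeats 2000000 in
/-- The remaining pure-real algebra. -/
lemma final_algebra (μ L r P Q W Vb Vg : ℝ) (hμ : 0 < μ) (hLμ : μ ≤ L) (hr : 0 ≤ r)
    (hP : 0 ≤ P) (hQ : 0 ≤ Q) (hW : 0 ≤ W) (hVb : 0 ≤ Vb) (hVg : 0 ≤ Vg)
    (hA : μ*(2*L-μ)*P^2 ≤ (L-μ)^2*Vb) (hB : μ*(2*L-μ)*Q^2 ≤ (L-μ)^2*Vg)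
    (hT : Vb + Vg + W^2 ≤ r^2) : P + W + Q ≤ Real.sqrt (L/μ) * r := by
  have hL : 0 < L := lt_of_lt_of_le hμ hLμ
  have hm : 0 < μ*(2*L-μ) := by nlinarith
  have key : μ*(P+W+Q)^2 ≤ L*r^2 := by
    have hTL := mul_le_mul_of_nonneg_left hT hL.le
    rcases eq_or_lt_of_le hLμ with hEq | hLt
    · -- μ = L
      have he0 : (L-μ)^2*Vb = 0 := by rw [hEq]; ring
      have he0' : (L-μ)^2*Vg = 0 := by rw [hEq]; ring
      have hP0 : P = 0 := by
        by_contra h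
        have h' : 0 < P^2 := pow_pos (lt_of_le_of_ne hP (Ne.symm h)) 2
        nlinarith
      have hQ0 : Q = 0 := by
        by_contra h
        have h' : 0 < Q^2 := pow_pos (lt_of_le_of_ne hQ (Ne.symm h)) 2
        nlinarith
      rw [hP0, hQ0]
      nlinarith
    · have he : 0 < L - μ := by linarith
      have hid : (L-μ)^2*(μ*(2*L-μ))*(L*(Vb+Vg+W^2) - μ*(P+Q+W)^2)
          = L*(μ*(2*L-μ))*((L-μ)^2*Vb - μ*(2*L-μ)*P^2)
          + L*(μ*(2*L-μ))*((L-μ)^2*Vg - μ*(2*L-μ)*Q^2)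
          + μ*(L-μ)^2*(μ*(2*L-μ))*(P-Q)^2
          + μ*(μ*(2*L-μ)*P-(L-μ)^2*W)^2 + μ*(μ*(2*L-μ)*Q-(L-μ)^2*W)^2
          + μ^2*(L-μ)*(μ*(2*L-μ))*P^2 + μ^2*(L-μ)*(μ*(2*L-μ))*Q^2
          + μ^2*(L-μ)^3*W^2 := by ring
      have hrhs : 0 ≤ L*(μ*(2*L-μ))*((L-μ)^2*Vb - μ*(2*L-μ)*P^2)
          + L*(μ*(2*L-μ))*((L-μ)^2*Vg - μ*(2*L-μ)*Q^2)
          + μ*(L-μ)^2*(μ*(2*L-μ))*(P-Q)^2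
          + μ*(μ*(2*L-μ)*P-(L-μ)^2*W)^2 + μ*(μ*(2*L-μ)*Q-(L-μ)^2*W)^2
          + μ^2*(L-μ)*(μ*(2*L-μ))*P^2 + μ^2*(L-μ)*(μ*(2*L-μ))*Q^2
          + μ^2*(L-μ)^3*W^2 := by
        have t1 : 0 ≤ L*(μ*(2*L-μ))*((L-μ)^2*Vb - μ*(2*L-μ)*P^2) :=
          mul_nonneg (mul_nonneg hL.le hm.le) (by linarith)
        have t2 : 0 ≤ L*(μ*(2*L-μ))*((L-μ)^2*Vg - μ*(2*L-μ)*Q^2) :=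
          mul_nonneg (mul_nonneg hL.le hm.le) (by linarith)
        have t3 : 0 ≤ μ*(L-μ)^2*(μ*(2*L-μ))*(P-Q)^2 := by positivity
        have t4 : 0 ≤ μ*(μ*(2*L-μ)*P-(L-μ)^2*W)^2 := by positivity
        have t5 : 0 ≤ μ*(μ*(2*L-μ)*Q-(L-μ)^2*W)^2 := by positivity
        have t6 : 0 ≤ μ^2*(L-μ)*(μ*(2*L-μ))*P^2 := by positivity
        have t7 : 0 ≤ μ^2*(L-μ)*(μ*(2*L-μ))*Q^2 := by positivity
        have t8 : 0 ≤ μ^2*(L-μ)^3*W^2 := by positivity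
        exact add_nonneg (add_nonneg (add_nonneg (add_nonneg (add_nonneg (add_nonneg
          (add_nonneg t1 t2) t3) t4) t5) t6) t7) t8
      have hW1 : 0 ≤ L*(Vb+Vg+W^2) - μ*(P+Q+W)^2 := by
        by_contra hneg
        push_neg at hneg
        have hprod : (L-μ)^2*(μ*(2*L-μ))*(L*(Vb+Vg+W^2) - μ*(P+Q+W)^2) < 0 :=
          mul_neg_of_pos_of_neg (by positivity) hneg
        rw [hid] at hprod
        linarith
      linarith
  have h2 : (P+W+Q)^2 ≤ (L/μ)*r^2 := by
    rw [div_mul_eq_mul_div, le_div_iff₀ hμ]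
    nlinarith [key]
  calc P+W+Q = Real.sqrt ((P+W+Q)^2) := (Real.sqrt_sq (by positivity)).symm
    _ ≤ Real.sqrt ((L/μ)*r^2) := Real.sqrt_le_sqrt h2
    _ = Real.sqrt (L/μ) * r := by
        rw [Real.sqrt_mul (by positivity), Real.sqrt_sq hr]

set_option maxHeartbeats 1000000 in
/-- Size of the Pareto set: for `μ`-strongly convex, `L`-Lipschitz-smooth
objectives with minimizers `xmin i` at pairwise distance at most `r`, the
Pareto set has diameter at most `√(L/μ) · r`; more precisely, any point at
distance more than `2√(L/μ) · r` from some minimizer is not Pareto optimal. -/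
theorem pareto_diam_le {d n : ℕ} (hn : 0 < n) (μ L r : ℝ) (hμ : 0 < μ) (hLμ : μ ≤ L)
    (hr : 0 ≤ r)
    (f : Fin n → EuclideanSpace ℝ (Fin d) → ℝ)
    (xmin : Fin n → EuclideanSpace ℝ (Fin d))
    (hmin : ∀ i, IsMinOn (f i) Set.univ (xmin i))
    (hconv : ∀ i, StrongConvexOn Set.univ μ (f i))
    (hsc : ∀ i x, f i (xmin i) + μ / 2 * ‖x - xmin i‖ ^ 2 ≤ f i x)
    (hsm : ∀ i x, f i x ≤ f i (xmin i) + L / 2 * ‖x - xmin i‖ ^ 2)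
    (hdist : ∀ i j, ‖xmin i - xmin j‖ ≤ r) :
    (∀ p q, ParetoOptimal f p → ParetoOptimal f q →
      ‖p - q‖ ≤ Real.sqrt (L / μ) * r) ∧
    (∀ x i, 2 * Real.sqrt (L / μ) * r < ‖x - xmin i‖ → ¬ ParetoOptimal f x) := by
  have hL : 0 < L := lt_of_lt_of_le hμ hLμ
  constructor
  · intro p q hp hq
    obtain ⟨β, hβ0, hβ1, hβs⟩ := exists_weights hn μ hμ f hconv p hp (lemA hn μ hμ f hconv p hp)
    obtain ⟨γ, hγ0, hγ1, hγs⟩ := exists_weights hn μ hμ f hconv q hq (lemA hn μ hμ f hconv q hq)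
    have hPb := point_bound μ L hμ hLμ f xmin hsc hsm p β hβ0 hβ1 hβs
    have hQb := point_bound μ L hμ hLμ f xmin hsc hsm q γ hγ0 hγ1 hγs
    have inner_ub : ∀ i, (∑ j, γ j * ‖xmin i - xmin j‖^2) ≤ r^2 := by
      intro i
      calc ∑ j, γ j * ‖xmin i - xmin j‖^2 ≤ ∑ j, γ j * r^2 := by
            apply Finset.sum_le_sum
            intro j _
            exact mul_le_mul_of_nonneg_left
              (pow_le_pow_left₀ (norm_nonneg _) (hdist i j) 2) (hγ0 j)
        _ = r^2 := by rw [← Finset.sum_mul, hγ1, one_mul]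
    have hTub : (∑ i, β i * (∑ j, γ j * ‖xmin i - xmin j‖^2)) ≤ r^2 := by
      calc ∑ i, β i * (∑ j, γ j * ‖xmin i - xmin j‖^2) ≤ ∑ i, β i * r^2 := by
            apply Finset.sum_le_sum
            intro i _
            exact mul_le_mul_of_nonneg_left (inner_ub i) (hβ0 i)
        _ = r^2 := by rw [← Finset.sum_mul, hβ1, one_mul]
    have hTeq : ∑ i, β i * (∑ j, γ j * ‖xmin i - xmin j‖^2)
        = (∑ i, β i * ‖(∑ j, β j • xmin j) - xmin i‖^2)
          + (∑ i, γ i * ‖(∑ j, γ j • xmin j) - xmin i‖^2)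
          + ‖(∑ j, β j • xmin j) - (∑ j, γ j • xmin j)‖^2 := by
      calc ∑ i, β i * (∑ j, γ j * ‖xmin i - xmin j‖^2)
          = ∑ i, (β i * ‖xmin i - ∑ j, γ j • xmin j‖^2
              + β i * (∑ j, γ j * ‖(∑ k, γ k • xmin k) - xmin j‖^2)) := by
            apply Finset.sum_congr rfl
            intro i _
            rw [sum_dist_sq γ hγ1 xmin (xmin i)]
            ring
        _ = (∑ i, β i * ‖xmin i - ∑ j, γ j • xmin j‖^2)
              + (∑ i, β i) * (∑ j, γ j * ‖(∑ k, γ k • xmin k) - xmin j‖^2) := by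
            rw [Finset.sum_add_distrib, Finset.sum_mul]
        _ = (∑ i, β i * ‖(∑ j, γ j • xmin j) - xmin i‖^2)
              + (∑ j, γ j * ‖(∑ k, γ k • xmin k) - xmin j‖^2) := by
            rw [hβ1, one_mul]
            congr 1
            apply Finset.sum_congr rfl
            intro i _
            rw [norm_sub_rev]
        _ = (∑ i, β i * ‖(∑ j, β j • xmin j) - xmin i‖^2)
          + (∑ i, γ i * ‖(∑ j, γ j • xmin j) - xmin i‖^2)
          + ‖(∑ j, β j • xmin j) - (∑ j, γ j • xmin j)‖^2 := by
            rw [sum_dist_sq β hβ1 xmin (∑ j, γ j • xmin j)]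
            rw [norm_sub_rev (∑ j, γ j • xmin j) (∑ j, β j • xmin j)]
            ring
    have hT : (∑ i, β i * ‖(∑ j, β j • xmin j) - xmin i‖^2)
          + (∑ i, γ i * ‖(∑ j, γ j • xmin j) - xmin i‖^2)
          + ‖(∑ j, β j • xmin j) - (∑ j, γ j • xmin j)‖^2 ≤ r^2 := by
      rw [← hTeq]
      exact hTub
    have htri : ‖p - q‖ ≤ ‖p - ∑ j, β j • xmin j‖ + ‖(∑ j, β j • xmin j) - (∑ j, γ j • xmin j)‖
        + ‖q - ∑ j, γ j • xmin j‖ := by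
      have h1 : p - q = (p - ∑ j, β j • xmin j)
          + ((∑ j, β j • xmin j) - (∑ j, γ j • xmin j)) + ((∑ j, γ j • xmin j) - q) := by
        abel
      calc ‖p - q‖ = ‖(p - ∑ j, β j • xmin j)
          + ((∑ j, β j • xmin j) - (∑ j, γ j • xmin j)) + ((∑ j, γ j • xmin j) - q)‖ := by
            rw [← h1]
        _ ≤ ‖p - ∑ j, β j • xmin j‖ + ‖(∑ j, β j • xmin j) - (∑ j, γ j • xmin j)‖
            + ‖(∑ j, γ j • xmin j) - q‖ := norm_add₃_le
        _ = ‖p - ∑ j, β j • xmin j‖ + ‖(∑ j, β j • xmin j) - (∑ j, γ j • xmin j)‖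
            + ‖q - ∑ j, γ j • xmin j‖ := by rw [norm_sub_rev (∑ j, γ j • xmin j) q]
    have hfin := final_algebra μ L r ‖p - ∑ j, β j • xmin j‖ ‖q - ∑ j, γ j • xmin j‖
      ‖(∑ j, β j • xmin j) - (∑ j, γ j • xmin j)‖
      (∑ i, β i * ‖(∑ j, β j • xmin j) - xmin i‖^2)
      (∑ i, γ i * ‖(∑ j, γ j • xmin j) - xmin i‖^2)
      hμ hLμ hr (norm_nonneg _) (norm_nonneg _) (norm_nonneg _)
      (Finset.sum_nonneg fun i _ => mul_nonneg (hβ0 i) (sq_nonneg _))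
      (Finset.sum_nonneg fun i _ => mul_nonneg (hγ0 i) (sq_nonneg _))
      hPb hQb hT
    linarith
  · intro x i hfar hpar
    have hκ1 : (1:ℝ) ≤ Real.sqrt (L/μ) := by
      rw [show (1:ℝ) = Real.sqrt 1 by rw [Real.sqrt_one]]
      apply Real.sqrt_le_sqrt
      rw [le_div_iff₀ hμ]
      linarith
    have hstrict : ∀ j, f j (xmin i) < f j x := by
      intro j
      have h1 : ‖x - xmin i‖ ≤ ‖x - xmin j‖ + ‖xmin j - xmin i‖ := by
        have h : x - xmin i = (x - xmin j) + (xmin j - xmin i) := by abel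
        rw [h]
        exact norm_add_le _ _
      have h3 : Real.sqrt (L/μ) * r < ‖x - xmin j‖ := by
        have h4 : Real.sqrt (L/μ) * r ≤ 2*Real.sqrt (L/μ)*r - r := by nlinarith
        linarith [hdist j i]
      have h5 : L/μ * r^2 < ‖x - xmin j‖^2 := by
        have hs : 0 ≤ Real.sqrt (L/μ) * r := by positivity
        have h6 := mul_self_lt_mul_self hs h3
        calc L/μ * r^2 = (Real.sqrt (L/μ) * r) * (Real.sqrt (L/μ) * r) := by
              rw [show (Real.sqrt (L/μ) * r) * (Real.sqrt (L/μ) * r)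
                  = Real.sqrt (L/μ) * Real.sqrt (L/μ) * r^2 by ring,
                Real.mul_self_sqrt (by positivity)]
          _ < ‖x - xmin j‖^2 := by rw [sq]; exact h6
      have h7 := hsm j (xmin i)
      have h8 := hsc j x
      have h9 : ‖xmin i - xmin j‖^2 ≤ r^2 := pow_le_pow_left₀ (norm_nonneg _) (hdist i j) 2
      have h10 : μ * (L/μ * r^2) = L * r^2 := by field_simp
      have h11 : μ * (L/μ * r^2) < μ * ‖x - xmin j‖^2 := mul_lt_mul_of_pos_left h5 hμ
      have h12 : L * ‖xmin i - xmin j‖^2 ≤ L * r^2 := mul_le_mul_of_nonneg_left h9 hL.le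
      linarith
    exact hpar ⟨xmin i, fun j => (hstrict j).le, ⟨i, hstrict i⟩⟩
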